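/- Let n be a natural number and a, b, c, d real numbers such that all Pochhammer symbols (c)_k, (d)_k, (c+d−a−b)_k are nonzero for 0 ≤ k ≤ n. Then ∑_{k=0}^n [(−n)_k (a)_k (b)_k]/[(c)_k (d)_k k!] = [(c+d−a−b)_n]/[(c)_n] · ∑_{k=0}^n [(−n)_k (d−a)_k (d−b)_k]/[(d)_k (c+d−a−b)_k k!]. -/

import Mathlib

/-- The Pochhammer symbol `(a)_k = a (a+1) ⋯ (a+k-1)` over ℝ. -/
noncomputable def poch (a : ℝ) (k : ℕ) : ℝ := (ascPochhammer ℝ k).eval a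

lemma poch_zero (x : ℝ) : poch x 0 = 1 := by simp [poch]

lemma poch_succ (x : ℝ) (k : ℕ) : poch x (k + 1) = poch x k * (x + k) :=
  ascPochhammer_succ_eval k x

lemma poch_succ' (x : ℝ) (k : ℕ) : poch x (k + 1) = x * poch (x + 1) k := by
  simp [poch, ascPochhammer_succ_left, Polynomial.eval_comp]

lemma poch_add (x : ℝ) (i j : ℕ) : poch x (i + j) = poch x i * poch (x + i) j := by
  have := congrArg (Polynomial.eval x) (ascPochhammer_mul (S := ℝ) i j)
  simpa [poch, Polynomial.eval_comp] using this.symm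

/-- Chu–Vandermonde, polynomial form. -/
lemma CV : ∀ (m : ℕ) (B C : ℝ),
    ∑ i ∈ Finset.range (m + 1),
      (-1 : ℝ) ^ i * (m.choose i) * poch B i * poch (C + i) (m - i) = poch (C - B) m := by
  intro m
  induction m with
  | zero => intro B C; simp [poch_zero]
  | succ m ih =>
    intro B C
    have key : ∑ i ∈ Finset.range (m + 2),
        (-1 : ℝ) ^ i * ((m+1).choose i) * poch B i * poch (C + i) (m + 1 - i)
        = (C - B) * ∑ i ∈ Finset.range (m + 1),
            (-1 : ℝ) ^ i * (m.choose i) * poch B i * poch ((C + 1) + i) (m - i) := by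
      have hA1 : ∑ i ∈ Finset.range (m + 2),
          (-1 : ℝ) ^ i * (m.choose i) * poch B i * poch (C + i) (m + 1 - i)
          = ∑ i ∈ Finset.range (m + 1),
            (-1 : ℝ) ^ i * (m.choose i) * poch B i * poch (C + i) (m + 1 - i) := by
        rw [Finset.sum_range_succ, Nat.choose_succ_self]
        simp
      have hsplit : ∑ i ∈ Finset.range (m + 2),
          (-1 : ℝ) ^ i * ((m+1).choose i) * poch B i * poch (C + i) (m + 1 - i)
          = (∑ i ∈ Finset.range (m + 2),
              (-1 : ℝ) ^ i * (m.choose i) * poch B i * poch (C + i) (m + 1 - i))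
            + ∑ i ∈ Finset.range (m + 1),
              (-1 : ℝ) ^ (i+1) * (m.choose i) * poch B (i+1) * poch (C + (i+1)) (m - i) := by
        rw [Finset.sum_range_succ' (fun i => (-1 : ℝ) ^ i * ((m+1).choose i) * poch B i * poch (C + i) (m + 1 - i)),
            Finset.sum_range_succ' (fun i => (-1 : ℝ) ^ i * (m.choose i) * poch B i * poch (C + i) (m + 1 - i))]
        have h2 : ∀ (x y z w w' : ℝ), x = y + z → w = w' → x + w = y + w' + z := by
          intros x y z w w' h hw; rw [h, hw]; ring
        refine h2 _ _ _ _ _ ?_ (by norm_num)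
        rw [← Finset.sum_add_distrib]
        refine Finset.sum_congr rfl fun i hi => ?_
        simp only [Nat.choose_succ_succ]
        push_cast
        simp only [Nat.succ_eq_add_one]
        ring
      rw [hsplit, hA1, ← Finset.sum_add_distrib, Finset.mul_sum]
      refine Finset.sum_congr rfl fun i hi => ?_
      have hi' : i ≤ m := Nat.lt_succ_iff.mp (Finset.mem_range.mp hi)
      have h1 : m + 1 - i = (m - i) + 1 := by omega
      rw [h1, poch_succ' (C + i) (m - i), poch_succ B i]
      have : C + (i:ℝ) + 1 = C + 1 + i := by ring
      rw [this]
      push_cast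
      ring
    rw [key, ih B (C + 1)]
    have : C + 1 - B = (C - B) + 1 := by ring
    rw [this, ← poch_succ']

/-- Inverse Chu–Vandermonde: expand `(A)_k` in terms of `(D-A)_j`. -/
lemma CV' (k : ℕ) (A D : ℝ) :
    poch A k = ∑ j ∈ Finset.range (k + 1),
      (-1 : ℝ) ^ j * (k.choose j) * poch (D - A) j * poch (D + j) (k - j) := by
  have := CV k (D - A) D
  have h : D - (D - A) = A := by ring
  rw [h] at this
  exact this.symm

/-- The key polynomial identity behind Thomae's (A3). -/
lemma core (n : ℕ) (A B C D : ℝ) :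
    ∑ k ∈ Finset.range (n + 1), (-1 : ℝ) ^ k * (n.choose k) * poch A k * poch B k *
        poch (C + k) (n - k) * poch (D + k) (n - k)
    = ∑ j ∈ Finset.range (n + 1), (n.choose j : ℝ) * poch B j * poch (D - A) j *
        poch (C - B) (n - j) * poch (D + j) (n - j) := by
  set F : ℕ → ℕ → ℝ := fun k j =>
    (-1 : ℝ) ^ k * (n.choose k) * ((-1 : ℝ) ^ j * (k.choose j) * poch (D - A) j *
      poch (D + j) (k - j)) * poch B k * poch (C + k) (n - k) * poch (D + k) (n - k) with hF
  have step1 : ∑ k ∈ Finset.range (n + 1), (-1 : ℝ) ^ k * (n.choose k) * poch A k * poch B k *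
      poch (C + k) (n - k) * poch (D + k) (n - k)
      = ∑ k ∈ Finset.range (n + 1), ∑ j ∈ Finset.range (n + 1), F k j := by
    refine Finset.sum_congr rfl fun k hk => ?_
    rw [Finset.mem_range] at hk
    have hre : (-1 : ℝ) ^ k * (n.choose k) * poch A k * poch B k *
        poch (C + k) (n - k) * poch (D + k) (n - k)
        = poch A k * ((-1 : ℝ) ^ k * (n.choose k) * poch B k *
          poch (C + k) (n - k) * poch (D + k) (n - k)) := by ring
    rw [hre, CV' k A D, Finset.sum_mul]
    have hsub : Finset.range (k + 1) ⊆ Finset.range (n + 1) := by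
      intro x hx; rw [Finset.mem_range] at *; omega
    rw [Finset.sum_subset hsub (fun x _ hx' => by
      have hx2 : k < x := by rw [Finset.mem_range] at hx'; omega
      rw [Nat.choose_eq_zero_of_lt hx2]
      push_cast
      ring)]
    exact Finset.sum_congr rfl fun j _ => by rw [hF]; ring
  rw [step1, Finset.sum_comm]
  refine Finset.sum_congr rfl fun j hj => ?_
  rw [Finset.mem_range] at hj
  have hj' : j ≤ n := by omega
  -- restrict the inner sum to Ico j (n+1)
  have hsub : Finset.Ico j (n + 1) ⊆ Finset.range (n + 1) := by
    intro x hx; rw [Finset.mem_Ico] at hx; rw [Finset.mem_range]; omega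
  rw [show Finset.range (n+1) = Finset.Ico 0 (n+1) by rw [Finset.range_eq_Ico]] 
  rw [← Finset.sum_subset (by intro x hx; rw [Finset.mem_Ico] at *; omega :
        Finset.Ico j (n + 1) ⊆ Finset.Ico 0 (n + 1))
      (fun x _ hx' => by
        have hxj : x < j := by
          rw [Finset.mem_Ico] at *; omega
        rw [hF]
        simp only
        rw [Nat.choose_eq_zero_of_lt hxj]
        push_cast
        ring)]
  rw [Finset.sum_Ico_eq_sum_range]
  have hrange : n + 1 - j = (n - j) + 1 := by omega
  rw [hrange]
  -- now evaluate the inner sum via CV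
  have hCV := CV (n - j) (B + j) (C + j)
  have hCB : C + (j:ℝ) - (B + j) = C - B := by ring
  rw [hCB] at hCV
  calc ∑ m ∈ Finset.range ((n - j) + 1), F (j + m) j
      = ∑ m ∈ Finset.range ((n - j) + 1),
          (n.choose j : ℝ) * poch B j * poch (D - A) j * poch (D + j) (n - j) *
            ((-1 : ℝ) ^ m * ((n - j).choose m) * poch (B + j) m *
              poch ((C + j) + m) ((n - j) - m)) := by
        refine Finset.sum_congr rfl fun m hm => ?_
        rw [Finset.mem_range] at hm
        have hm' : m ≤ n - j := by omega
        rw [hF]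
        simp only
        -- binomials
        have hbin : (n.choose (j + m) : ℝ) * ((j + m).choose j) =
            (n.choose j : ℝ) * ((n - j).choose m) := by
          rw [← Nat.cast_mul, ← Nat.cast_mul, Nat.choose_mul (n := n) (k := j + m) (s := j) (by omega),
              Nat.add_sub_cancel_left]
        -- signs
        have hsign : (-1 : ℝ) ^ (j + m) * (-1 : ℝ) ^ j = (-1 : ℝ) ^ m := by
          rw [pow_add]
          have : (-1 : ℝ) ^ j * (-1 : ℝ) ^ j = 1 := by
            rw [← pow_add]; exact Even.neg_one_pow ⟨j, rfl⟩
          calc (-1:ℝ)^j * (-1)^m * (-1)^j = ((-1:ℝ)^j * (-1)^j) * (-1)^m := by ring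
          _ = (-1 : ℝ)^m := by rw [this, one_mul]
        -- pochhammer splits
        have hsplitB : poch B (j + m) = poch B j * poch (B + j) m := poch_add B j m
        have hDj : j + m - j = m := by omega
        have hsub1 : n - (j + m) = (n - j) - m := by omega
        have hcast : ((j + m : ℕ) : ℝ) = (j : ℝ) + m := by push_cast; ring
        have hC : C + ((j + m : ℕ) : ℝ) = (C + j) + m := by rw [hcast]; ring
        have hD : D + ((j + m : ℕ) : ℝ) = (D + j) + m := by rw [hcast]; ring
        have hDcomb : poch (D + j) m * poch ((D + j) + m) ((n - j) - m)
            = poch (D + j) (n - j) := by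
          rw [← poch_add]
          congr 1
          omega
        rw [hDj, hsplitB, hC, hD, hsub1]
        rw [show ((-1:ℝ) ^ (j + m) * ↑(n.choose (j + m)) *
              ((-1:ℝ) ^ j * ↑((j + m).choose j) * poch (D - A) j * poch (D + ↑j) m) *
              (poch B j * poch (B + ↑j) m) * poch (C + ↑j + ↑m) (n - j - m) *
              poch (D + ↑j + ↑m) (n - j - m))
            = ((-1:ℝ) ^ (j + m) * (-1:ℝ) ^ j) * ((n.choose (j + m) : ℝ) * ((j + m).choose j)) *
              poch (D - A) j * poch B j * poch (B + ↑j) m * poch (C + ↑j + ↑m) (n - j - m) *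
              (poch (D + ↑j) m * poch ((D + ↑j) + ↑m) (n - j - m)) by ring]
        rw [hsign, hbin, hDcomb]
        push_cast
        ring
    _ = (n.choose j : ℝ) * poch B j * poch (D - A) j * poch (C - B) (n - j) *
          poch (D + j) (n - j) := by
        rw [← Finset.mul_sum, hCV]
        ring

lemma poch_neg (n : ℕ) : ∀ k, k ≤ n →
    poch (-(n : ℝ)) k = (-1 : ℝ) ^ k * (n.choose k) * (k.factorial : ℝ) := by
  intro k
  induction k with
  | zero => intro _; simp [poch_zero]
  | succ k ih =>
    intro hk
    have hk' : k ≤ n := by omega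
    have h2 : ((n.choose (k + 1) : ℝ)) * ((k : ℝ) + 1) = (n.choose k : ℝ) * ((n : ℝ) - k) := by
      have h1 := congrArg (Nat.cast : ℕ → ℝ) (Nat.choose_succ_right_eq n k)
      push_cast [Nat.cast_sub hk'] at h1
      exact h1
    rw [poch_succ, ih hk', Nat.factorial_succ]
    push_cast
    linear_combination ((-1 : ℝ) ^ k * (k.factorial : ℝ)) * h2

theorem thomae_A3 (n : ℕ) (a b c d : ℝ)
    (hc : ∀ k ≤ n, poch c k ≠ 0) (hd : ∀ k ≤ n, poch d k ≠ 0)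
    (h1 : ∀ k ≤ n, poch (c + d - a - b) k ≠ 0) :
    ∑ k ∈ Finset.range (n + 1),
        (poch (-(n : ℝ)) k * poch a k * poch b k) /
          (poch c k * poch d k * (k.factorial : ℝ)) =
      poch (c + d - a - b) n / poch c n *
        ∑ k ∈ Finset.range (n + 1),
          (poch (-(n : ℝ)) k * poch (d - a) k * poch (d - b) k) /
            (poch d k * poch (c + d - a - b) k * (k.factorial : ℝ)) := by
  set e := c + d - a - b with he
  have hfac : ∀ k : ℕ, (k.factorial : ℝ) ≠ 0 :=
    fun k => Nat.cast_ne_zero.mpr k.factorial_ne_zero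
  have key : ∀ (x y u v : ℝ), (∀ k ≤ n, poch x k ≠ 0) → (∀ k ≤ n, poch y k ≠ 0) →
      (∑ k ∈ Finset.range (n + 1),
          (poch (-(n : ℝ)) k * poch u k * poch v k) /
            (poch x k * poch y k * (k.factorial : ℝ))) * (poch x n * poch y n)
      = ∑ k ∈ Finset.range (n + 1), (-1 : ℝ) ^ k * (n.choose k) * poch u k * poch v k *
          poch (x + k) (n - k) * poch (y + k) (n - k) := by
    intro x y u v hx hy
    rw [Finset.sum_mul]
    refine Finset.sum_congr rfl fun k hk => ?_
    rw [Finset.mem_range] at hk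
    have hk' : k ≤ n := by omega
    have hxn : poch x n = poch x k * poch (x + k) (n - k) := by
      rw [← poch_add]; congr 1; omega
    have hyn : poch y n = poch y k * poch (y + k) (n - k) := by
      rw [← poch_add]; congr 1; omega
    rw [poch_neg n k hk', hxn, hyn]
    field_simp [hx k hk', hy k hk']
  have e1 := key c d a b hc hd
  have e2 := key d e (d - a) (d - b) hd h1
  have h3 := core n a b c d
  have h4 := core n (d - b) (d - a) e d
  have hb : d - (d - b) = b := by ring
  have hcb : e - (d - a) = c - b := by rw [he]; ring
  rw [hb, hcb] at h4
  have hM1 : (∑ k ∈ Finset.range (n + 1),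
      (poch (-(n : ℝ)) k * poch a k * poch b k) /
        (poch c k * poch d k * (k.factorial : ℝ))) * (poch c n * poch d n)
      = ∑ j ∈ Finset.range (n + 1), (n.choose j : ℝ) * poch b j * poch (d - a) j *
          poch (c - b) (n - j) * poch (d + j) (n - j) := e1.trans h3
  have hM2 : (∑ k ∈ Finset.range (n + 1),
      (poch (-(n : ℝ)) k * poch (d - a) k * poch (d - b) k) /
        (poch d k * poch e k * (k.factorial : ℝ))) * (poch d n * poch e n)
      = ∑ j ∈ Finset.range (n + 1), (n.choose j : ℝ) * poch b j * poch (d - a) j *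
          poch (c - b) (n - j) * poch (d + j) (n - j) := by
    calc _ = ∑ k ∈ Finset.range (n + 1), (-1 : ℝ) ^ k * (n.choose k) * poch (d - a) k *
            poch (d - b) k * poch (d + k) (n - k) * poch (e + k) (n - k) := e2
      _ = ∑ k ∈ Finset.range (n + 1), (-1 : ℝ) ^ k * (n.choose k) * poch (d - b) k *
            poch (d - a) k * poch (e + k) (n - k) * poch (d + k) (n - k) :=
          Finset.sum_congr rfl fun k _ => by ring
      _ = ∑ j ∈ Finset.range (n + 1), (n.choose j : ℝ) * poch (d - a) j * poch b j *
            poch (c - b) (n - j) * poch (d + j) (n - j) := h4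
      _ = _ := Finset.sum_congr rfl fun j _ => by ring
  have hcn : poch c n ≠ 0 := hc n le_rfl
  have hdn : poch d n ≠ 0 := hd n le_rfl
  have hen : poch e n ≠ 0 := h1 n le_rfl
  have g1 := eq_div_of_mul_eq (mul_ne_zero hcn hdn) hM1
  have g2 := eq_div_of_mul_eq (mul_ne_zero hdn hen) hM2
  rw [g1, g2]
  field_simp
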